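/- Let Q be a group and let N be a finite normal subgroup of Q such that the quotient group Q/N is residually finite. Then every virtually torsion-free subgroup of Q is residually finite. -/

import Mathlib

/-- `G` is residually finite: every nontrivial element is detected by a
homomorphism to a finite group. -/
def ResiduallyFinite (G : Type*) [Group G] : Prop :=
  ∀ g : G, g ≠ 1 → ∃ (F : Type) (_ : Group F) (_ : Finite F) (φ : G →* F), φ g ≠ 1

/-- `G` is virtually torsion-free: it has a torsion-free subgroup of finite
index. -/
def VirtuallyTorsionFree (G : Type*) [Group G] : Prop :=
  ∃ K : Subgroup G, K.FiniteIndex ∧ (∀ g : K, g ≠ 1 → ¬IsOfFinOrder g)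

/-- Transport of permutations along an equivalence, as a monoid hom. -/
def myPermCongrHom {α : Type*} {β : Type*} (e : α ≃ β) :
    Equiv.Perm α →* Equiv.Perm β where
  toFun p := (e.symm.trans p).trans e
  map_one' := by ext x; simp
  map_mul' p q := by ext x; simp

lemma myPermCongrHom_ne_one {α β : Type*} (e : α ≃ β) {p : Equiv.Perm α}
    (hp : p ≠ 1) : myPermCongrHom e p ≠ 1 := by
  intro hcontra
  apply hp
  ext x
  have := congrArg (fun q : Equiv.Perm β => q (e x)) hcontra
  simpa [myPermCongrHom] using this

/-- If `N` is a finite normal subgroup of `Q` such that `Q/N` is residually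
finite, then every virtually torsion-free subgroup of `Q` is residually
finite. -/
theorem virtuallyTorsionFree_subgroup_residuallyFinite {Q : Type*} [Group Q]
    (N : Subgroup Q) [N.Normal] [Finite N]
    (hQN : ResiduallyFinite (Q ⧸ N)) (H : Subgroup Q)
    (hH : VirtuallyTorsionFree H) :
    ResiduallyFinite H := by
  obtain ⟨K, hKfi, hKtf⟩ := hH
  intro h hne
  by_cases hmem : (h : Q) ∈ N
  · -- h has finite order in Q, hence in H; so h ∉ K, and H ⧸ K separates it.
    have hfin : IsOfFinOrder (h : Q) := by
      have h1 : IsOfFinOrder (⟨(h : Q), hmem⟩ : N) := isOfFinOrder_of_finite _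
      have := (Function.Injective.isOfFinOrder_iff
        (f := N.subtype) N.subtype_injective).mpr h1
      exact this
    have hfinH : IsOfFinOrder h :=
      (Function.Injective.isOfFinOrder_iff
        (f := H.subtype) H.subtype_injective).mp hfin
    have hK : h ∉ K := by
      intro hK
      refine hKtf ⟨h, hK⟩ (fun hc => hne (congrArg Subtype.val hc)) ?_
      exact (Function.Injective.isOfFinOrder_iff
        (f := K.subtype) K.subtype_injective).mp hfinH
    have : Finite (H ⧸ K) := K.finite_quotient_of_finiteIndex
    have hFT : Fintype (H ⧸ K) := Fintype.ofFinite _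
    let e : (H ⧸ K) ≃ Fin (Fintype.card (H ⧸ K)) := Fintype.equivFin _
    refine ⟨Equiv.Perm (Fin (Fintype.card (H ⧸ K))), inferInstance, inferInstance,
      (myPermCongrHom e).comp (MulAction.toPermHom H (H ⧸ K)), ?_⟩
    apply myPermCongrHom_ne_one
    intro hcontra
    apply hK
    have h2 := congrArg (fun p : Equiv.Perm (H ⧸ K) =>
      p (QuotientGroup.mk 1)) hcontra
    simp only [MulAction.toPermHom_apply, MulAction.toPerm_apply,
      Equiv.Perm.one_apply] at h2
    rw [MulAction.Quotient.smul_mk] at h2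
    have h3 : (h • (1 : H))⁻¹ * 1 ∈ K := QuotientGroup.eq.mp h2
    simpa [smul_eq_mul] using h3
  · -- h survives in Q ⧸ N
    have hne' : (QuotientGroup.mk (h : Q) : Q ⧸ N) ≠ 1 := by
      simpa [QuotientGroup.eq_one_iff] using hmem
    obtain ⟨F, _, _, φ, hφ⟩ := hQN _ hne'
    exact ⟨F, ‹_›, ‹_›, φ.comp ((QuotientGroup.mk' N).comp H.subtype), hφ⟩
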